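/- arXiv:1510.05211 — 3 statements merged into one kernel-verified Lean document; each statement's English description precedes it below -/
import Mathlib

section
/- Let q be a polynomial of degree k ≤ n without multiple (repeated) irreducible factors, defining a curve in ℝ². Then any subset of the zero set of q containing more than d(n,k) = k(2n+3−k)/2 points is n-dependent. -/
open MvPolynomial

/-- `p` is an `n`-fundamental polynomial of the node `A` with respect to the node set `X`. -/
def IsFund (n : ℕ) (X : Finset (Fin 2 → ℝ)) (A : Fin 2 → ℝ)
    (p : MvPolynomial (Fin 2) ℝ) : Prop :=
  p.totalDegree ≤ n ∧ eval A p = 1 ∧ ∀ B ∈ X, B ≠ A → eval B p = 0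

/-- The node set `X` is `n`-independent: every node has an `n`-fundamental polynomial. -/
def NInd (n : ℕ) (X : Finset (Fin 2 → ℝ)) : Prop :=
  ∀ A ∈ X, ∃ p, IsFund n X A p

open Finset in
def tri (m : ℕ) : Finset (ℕ × ℕ) :=
  (Finset.range (m+1) ×ˢ Finset.range (m+1)).filter (fun p => p.1 + p.2 ≤ m)

open Finset in
lemma mem_tri {m : ℕ} {p : ℕ × ℕ} : p ∈ tri m ↔ p.1 + p.2 ≤ m := by
  simp only [tri, mem_filter, mem_product, mem_range]; omega

lemma sum_succ_range (m : ℕ) : 2 * ∑ j ∈ Finset.range (m+1), (j+1) = (m+1)*(m+2) := by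
  induction m with
  | zero => simp
  | succ m ih => rw [Finset.sum_range_succ, Nat.mul_add, ih]; ring

open Finset in
lemma tri_card (m : ℕ) : 2 * (tri m).card = (m+1)*(m+2) := by
  have h : tri m = (Finset.range (m+1)).biUnion (fun j => Finset.HasAntidiagonal.antidiagonal j) := by
    ext p
    simp only [mem_tri, mem_biUnion, mem_range, Finset.HasAntidiagonal.mem_antidiagonal]
    exact ⟨fun hp => ⟨p.1 + p.2, by omega, rfl⟩, fun ⟨j, hj, h⟩ => by omega⟩
  rw [h, Finset.card_biUnion]
  · rw [show ∑ j ∈ Finset.range (m+1), (Finset.HasAntidiagonal.antidiagonal j).card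
        = ∑ j ∈ Finset.range (m+1), (j+1) by simp [Nat.card_antidiagonal]]
    exact sum_succ_range m
  · intro a _ b _ hab
    simp only [Finset.disjoint_left, Finset.HasAntidiagonal.mem_antidiagonal]
    intro p hp hq
    exact hab (hp ▸ hq)

lemma hsum (d : Fin 2 →₀ ℕ) : (d.sum fun _ e => e) = d 0 + d 1 := by
  rw [Finsupp.sum_fintype]
  · exact Fin.sum_univ_two d
  · intro; rfl

noncomputable def triEquiv (m : ℕ) :
    {d : Fin 2 →₀ ℕ // d ∈ {n : Fin 2 →₀ ℕ | (n.sum fun _ e => e) ≤ m}} ≃ {p // p ∈ tri m} where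
  toFun d := ⟨(d.1 0, d.1 1), mem_tri.mpr (by have := d.2; rwa [Set.mem_setOf_eq, hsum] at this)⟩
  invFun p := ⟨Finsupp.equivFunOnFinite.symm ![p.1.1, p.1.2], by
    have := mem_tri.mp p.2
    simp only [Set.mem_setOf_eq, hsum]
    simpa using this⟩
  left_inv d := by
    ext i
    fin_cases i <;> simp
  right_inv p := by
    ext <;> simp

lemma finrank_rtd (m : ℕ) :
    2 * Module.finrank ℝ (restrictTotalDegree (Fin 2) ℝ m) = (m+1)*(m+2) := by
  classical
  haveI : Fintype {d : Fin 2 →₀ ℕ // d ∈ {n : Fin 2 →₀ ℕ | (n.sum fun _ e => e) ≤ m}} :=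
    Fintype.ofEquiv _ (triEquiv m).symm
  have hb := Module.finrank_eq_card_basis
    (basisRestrictSupport ℝ {n : Fin 2 →₀ ℕ | (n.sum fun _ e => e) ≤ m})
  rw [show restrictTotalDegree (Fin 2) ℝ m
      = restrictSupport ℝ {n : Fin 2 →₀ ℕ | (n.sum fun _ e => e) ≤ m} from rfl, hb,
    Fintype.card_congr (triEquiv m), Fintype.card_coe]
  exact tri_card m


/-- Any subset of a squarefree curve of degree k ≤ n with more than d(n,k) points is
n-dependent, where d(n,k) = k(2n+3−k)/2. -/
theorem stmt_10 (n k : ℕ) (hk : k ≤ n) (q : MvPolynomial (Fin 2) ℝ)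
    (hq : q.totalDegree = k) (hsf : Squarefree q)
    (X : Finset (Fin 2 → ℝ)) (hXq : ∀ A ∈ X, eval A q = 0)
    (hcard : k * (2 * n + 3 - k) / 2 < X.card) :
    ¬ NInd n X := by
  classical
  intro hind
  have hq0 : q ≠ 0 := by rintro rfl; exact not_squarefree_zero hsf
  set m := n - k with hm
  have hmk : m + k = n := Nat.sub_add_cancel hk
  set V := restrictTotalDegree (Fin 2) ℝ n with hV
  set V' := restrictTotalDegree (Fin 2) ℝ m with hV'
  -- multiplication by q
  let mulq : MvPolynomial (Fin 2) ℝ →ₗ[ℝ] MvPolynomial (Fin 2) ℝ := LinearMap.mulLeft ℝ q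
  have hinj : Function.Injective mulq := fun a b h => by
    exact mul_left_cancel₀ hq0 h
  set W : Submodule ℝ (MvPolynomial (Fin 2) ℝ) := V'.map mulq with hW
  have hWV : W ≤ V := by
    rintro _ ⟨p, hp, rfl⟩
    rw [mem_restrictTotalDegree]
    calc (mulq p).totalDegree = (q * p).totalDegree := rfl
      _ ≤ q.totalDegree + p.totalDegree := totalDegree_mul q p
      _ ≤ k + m := by
          exact Nat.add_le_add (le_of_eq hq) ((mem_restrictTotalDegree _ _ _).mp hp)
      _ = n := by omega
  -- fundamental polynomials
  choose g hg using fun (A : X) => hind A A.2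
  -- evaluation map
  let E : V →ₗ[ℝ] (X → ℝ) :=
    { toFun := fun p A => eval (A : Fin 2 → ℝ) (p : MvPolynomial (Fin 2) ℝ)
      map_add' := by intro p r; funext A; simp
      map_smul' := by intro c p; funext A; simp [smul_eq_mul] }
  have hsurj : Function.Surjective E := by
    intro f
    refine ⟨⟨∑ A : X, f A • g A, ?_⟩, ?_⟩
    · exact Submodule.sum_mem _ fun A _ => Submodule.smul_mem _ _
        ((mem_restrictTotalDegree _ _ _).mpr (hg A).1)
    · funext B
      show eval (B : Fin 2 → ℝ) (∑ A : X, f A • g A) = f B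
      rw [map_sum]
      rw [Finset.sum_eq_single B]
      · simp [(hg B).2.1]
      · intro A _ hAB
        have : eval (B : Fin 2 → ℝ) (g A) = 0 :=
          (hg A).2.2 B B.2 (fun h => hAB (Subtype.ext h).symm)
        simp [this]
      · intro h; exact absurd (Finset.mem_univ B) h
  -- kernel contains W
  have hker : W.comap V.subtype ≤ LinearMap.ker E := by
    rintro ⟨p, hpV⟩ hp
    obtain ⟨r, hr, hqr⟩ := hp
    rw [LinearMap.mem_ker]
    funext A
    show eval (A : Fin 2 → ℝ) p = 0
    have hp' : p = q * r := hqr.symm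
    rw [hp', map_mul, hXq A A.2, zero_mul]
  -- dimension count
  haveI : FiniteDimensional ℝ V := by infer_instance
  have hrn := LinearMap.finrank_range_add_finrank_ker E
  have hrange : Module.finrank ℝ (LinearMap.range E) = X.card := by
    rw [LinearMap.range_eq_top.mpr hsurj, finrank_top, Module.finrank_fintype_fun_eq_card,
      Fintype.card_coe]
  have hWfr : Module.finrank ℝ W = Module.finrank ℝ V' :=
    (LinearEquiv.finrank_eq (Submodule.equivMapOfInjective mulq hinj V')).symm
  have hW'fr : Module.finrank ℝ (W.comap V.subtype) = Module.finrank ℝ W :=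
    LinearEquiv.finrank_eq (Submodule.comapSubtypeEquivOfLe hWV)
  have hkerge : Module.finrank ℝ V' ≤ Module.finrank ℝ (LinearMap.ker E) := by
    rw [← hWfr, ← hW'fr]
    exact Submodule.finrank_mono hker
  have h2V : 2 * Module.finrank ℝ V = (n+1)*(n+2) := finrank_rtd n
  have h2V' : 2 * Module.finrank ℝ V' = (m+1)*(m+2) := finrank_rtd m
  -- arithmetic
  have h2n : 2 * n + 3 - k = 2 * m + k + 3 := by omega
  rw [h2n] at hcard
  have heq : 2 * Module.finrank ℝ V
      = 2 * Module.finrank ℝ V' + k * (2*m+k+3) := by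
    rw [h2V, h2V', ← hmk]; ring
  have hev : 2 * (k * (2*m+k+3) / 2) = k * (2*m+k+3) := by
    rcases Nat.even_or_odd k with h | h
    · have : Even (k * (2*m+k+3)) := h.mul_right _
      omega
    · have : Even (2*m+k+3) := by
        rcases h with ⟨t, ht⟩
        exact ⟨m + t + 2, by omega⟩
      have : Even (k * (2*m+k+3)) := this.mul_left _
      omega
  rw [hrange] at hrn
  generalize k * (2*m+k+3) = c at heq hev hcard
  omega
end

section
/- Let q be a polynomial of degree k ≤ n without repeated irreducible factors and X a set of exactly d(n,k) = k(2n+3−k)/2 points on the curve q = 0. Then X is n-independent if and only if every p ∈ Π_n vanishing on X is of the form p = q·r with r ∈ Π_{n−k}. -/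
open MvPolynomial

private lemma sum_eq' (m : ℕ) : (∑ j ∈ Finset.range (m+1), (j+1)) * 2 = (m+1)*(m+2) := by
  induction m with
  | zero => rfl
  | succ m ih => rw [Finset.sum_range_succ, add_mul, ih]; ring

private def Tri (m : ℕ) : Finset (ℕ × ℕ) :=
  (Finset.range (m+1)).biUnion fun j => Finset.HasAntidiagonal.antidiagonal j

private lemma mem_Tri {m : ℕ} {p : ℕ × ℕ} : p ∈ Tri m ↔ p.1 + p.2 ≤ m := by
  simp only [Tri, Finset.mem_biUnion, Finset.mem_range, Finset.HasAntidiagonal.mem_antidiagonal]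
  constructor
  · rintro ⟨j, hj, h⟩; omega
  · intro h; exact ⟨p.1 + p.2, by omega, rfl⟩

private lemma card_Tri (m : ℕ) : (Tri m).card = (m+1)*(m+2)/2 := by
  have h : (Tri m).card = ∑ j ∈ Finset.range (m+1), (j+1) := by
    rw [Tri, Finset.card_biUnion]
    · simp [Finset.Nat.card_antidiagonal]
    · intro x _ y _ hxy
      rw [Function.onFun, Finset.disjoint_left]
      intro a ha ha'
      rw [Finset.HasAntidiagonal.mem_antidiagonal] at ha ha'
      omega
  have h2 := sum_eq' m
  omega

private lemma finrank_P (m : ℕ) :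
    Module.finrank ℝ (restrictTotalDegree (Fin 2) ℝ m) = (m+1)*(m+2)/2 := by
  have hsum : ∀ d : Fin 2 →₀ ℕ, (d.sum fun _ e => e) = d 0 + d 1 := by
    intro d
    rw [Finsupp.sum_fintype _ _ (fun _ => rfl), Fin.sum_univ_two]
  let e : ↑{d : Fin 2 →₀ ℕ | (d.sum fun _ e => e) ≤ m} ≃ {p : ℕ × ℕ // p ∈ Tri m} :=
    (Finsupp.equivFunOnFinite.trans (piFinTwoEquiv fun _ => ℕ)).subtypeEquiv (by
      intro d
      show (d.sum fun _ e => e) ≤ m ↔ _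
      rw [hsum d, mem_Tri]
      rfl)
  haveI : Fintype ↑{d : Fin 2 →₀ ℕ | (d.sum fun _ e => e) ≤ m} := Fintype.ofEquiv _ e.symm
  unfold MvPolynomial.restrictTotalDegree
  rw [Module.finrank_eq_card_basis (basisRestrictSupport ℝ _)]
  rw [Fintype.card_congr e, Fintype.card_coe, card_Tri]

private lemma key_arith (n k : ℕ) (hk : k ≤ n) :
    (n+1)*(n+2)/2 = k*(2*n+3-k)/2 + (n-k+1)*(n-k+2)/2 := by
  obtain ⟨j, rfl⟩ := Nat.exists_eq_add_of_le hk
  have h1 : 2*(k+j)+3-k = k+2*j+3 := by omega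
  have e0 : k + j - k = j := by omega
  rw [h1, e0]
  have h2 : (k+j+1)*(k+j+2) = k*(k+2*j+3) + (j+1)*(j+2) := by ring
  obtain ⟨a, ha⟩ : 2 ∣ (k+j+1)*(k+j+2) := (Nat.even_mul_succ_self (k+j+1)).two_dvd
  obtain ⟨c, hc⟩ : 2 ∣ (j+1)*(j+2) := (Nat.even_mul_succ_self (j+1)).two_dvd
  obtain ⟨b, hb⟩ : 2 ∣ k*(k+2*j+3) := by
    have h : k*(k+2*j+3) = k*(k+1) + 2*(k*(j+1)) := by ring
    rw [h]
    exact Nat.dvd_add (Nat.even_mul_succ_self k).two_dvd ⟨_, rfl⟩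
  rw [ha, hb, hc] at h2 ⊢
  omega

/-- A set of exactly d(n,k) points on a squarefree curve q of degree k ≤ n is
n-independent iff every polynomial of degree ≤ n vanishing on it is divisible by q. -/
theorem stmt_11 (n k : ℕ) (hk : k ≤ n) (q : MvPolynomial (Fin 2) ℝ)
    (hq : q.totalDegree = k) (hsf : Squarefree q)
    (X : Finset (Fin 2 → ℝ)) (hXq : ∀ A ∈ X, eval A q = 0)
    (hcard : X.card = k * (2 * n + 3 - k) / 2) :
    NInd n X ↔ ∀ p : MvPolynomial (Fin 2) ℝ, p.totalDegree ≤ n → (∀ A ∈ X, eval A p = 0) →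
      ∃ r : MvPolynomial (Fin 2) ℝ, r.totalDegree ≤ n - k ∧ p = q * r := by
  classical
  have hq0 : q ≠ 0 := hsf.ne_zero
  have hLA : ∀ (A : Fin 2 → ℝ) (p : MvPolynomial (Fin 2) ℝ), aeval A p = eval A p := by
    intro A p
    rw [aeval_def, Algebra.algebraMap_self]
    rfl
  -- the evaluation map
  let L : restrictTotalDegree (Fin 2) ℝ n →ₗ[ℝ] ({A // A ∈ X} → ℝ) :=
    LinearMap.pi fun A =>
      (MvPolynomial.aeval (A.1 : Fin 2 → ℝ)).toLinearMap ∘ₗ (restrictTotalDegree (Fin 2) ℝ n).subtype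
  have hLapply : ∀ (p : restrictTotalDegree (Fin 2) ℝ n) (A : {A // A ∈ X}),
      L p A = eval A.1 p.1 := by
    intro p A
    simp only [L, LinearMap.pi_apply, LinearMap.comp_apply, Submodule.subtype_apply,
      AlgHom.toLinearMap_apply, hLA]
  -- the multiplication-by-q map
  have hdeg : ∀ r : MvPolynomial (Fin 2) ℝ, r.totalDegree ≤ n - k → (q*r).totalDegree ≤ n := by
    intro r hr
    refine le_trans (totalDegree_mul q r) ?_
    rw [hq]; omega
  let M : restrictTotalDegree (Fin 2) ℝ (n-k) →ₗ[ℝ] restrictTotalDegree (Fin 2) ℝ n :=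
    { toFun := fun r => ⟨q * r.1,
        (mem_restrictTotalDegree _ _ _).mpr (hdeg r.1 ((mem_restrictTotalDegree _ _ _).mp r.2))⟩
      map_add' := by intro a b; apply Subtype.ext; simp [mul_add]
      map_smul' := by intro c a; apply Subtype.ext; simp [mul_smul_comm] }
  have hMinj : Function.Injective M := by
    intro a b hab
    apply Subtype.ext
    have h : q * a.1 = q * b.1 := congrArg Subtype.val hab
    exact mul_left_cancel₀ hq0 h
  have hMapply : ∀ r, (M r).1 = q * r.1 := fun r => rfl
  have hML : LinearMap.range M ≤ LinearMap.ker L := by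
    rintro x ⟨r, rfl⟩
    rw [LinearMap.mem_ker]
    funext A
    rw [hLapply, hMapply, eval_mul, hXq A.1 A.2, zero_mul]
    rfl
  -- NInd iff surjective
  have hNInd : NInd n X ↔ Function.Surjective L := by
    constructor
    · intro h
      rw [← LinearMap.range_eq_top, ← top_le_iff, ← (Pi.basisFun ℝ {A // A ∈ X}).span_eq,
        Submodule.span_le]
      rintro x ⟨A, rfl⟩
      obtain ⟨p, hpd, hp1, hp0⟩ := h A.1 A.2
      refine ⟨⟨p, (mem_restrictTotalDegree _ _ _).mpr hpd⟩, ?_⟩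
      funext B
      rw [hLapply, Pi.basisFun_apply]
      by_cases hBA : B = A
      · subst hBA; rw [Pi.single_eq_same, hp1]
      · rw [Pi.single_eq_of_ne hBA, hp0 B.1 B.2 (fun hh => hBA (Subtype.ext hh))]
    · intro h A hA
      obtain ⟨p, hp⟩ := h (Pi.single ⟨A, hA⟩ 1)
      refine ⟨p.1, (mem_restrictTotalDegree _ _ _).mp p.2, ?_, ?_⟩
      · have h1 := congrFun hp ⟨A, hA⟩
        rw [hLapply, Pi.single_eq_same] at h1
        exact h1
      · intro B hB hBA
        have h1 := congrFun hp ⟨B, hB⟩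
        rw [hLapply, Pi.single_eq_of_ne (fun hh => hBA (congrArg Subtype.val hh))] at h1
        exact h1
  -- RHS iff ker L ≤ range M
  have hRHS : (∀ p : MvPolynomial (Fin 2) ℝ, p.totalDegree ≤ n → (∀ A ∈ X, eval A p = 0) →
      ∃ r : MvPolynomial (Fin 2) ℝ, r.totalDegree ≤ n - k ∧ p = q * r) ↔
      LinearMap.ker L ≤ LinearMap.range M := by
    constructor
    · intro h p hp
      rw [LinearMap.mem_ker] at hp
      obtain ⟨r, hr, hpr⟩ := h p.1 ((mem_restrictTotalDegree _ _ _).mp p.2) (fun A hA => by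
        have h1 := congrFun hp ⟨A, hA⟩
        rw [hLapply] at h1
        exact h1)
      exact ⟨⟨r, (mem_restrictTotalDegree _ _ _).mpr hr⟩, Subtype.ext (by rw [hMapply]; exact hpr.symm)⟩
    · intro h p hpd hpv
      have hpker : (⟨p, (mem_restrictTotalDegree _ _ _).mpr hpd⟩ :
          restrictTotalDegree (Fin 2) ℝ n) ∈ LinearMap.ker L := by
        rw [LinearMap.mem_ker]
        funext A
        rw [hLapply, hpv A.1 A.2]
        rfl
      obtain ⟨r, hr⟩ := h hpker
      refine ⟨r.1, (mem_restrictTotalDegree _ _ _).mp r.2, ?_⟩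
      have := congrArg Subtype.val hr
      rw [hMapply] at this
      exact this.symm
  -- dimension bookkeeping
  have hrank := LinearMap.finrank_range_add_finrank_ker L
  have hPn : Module.finrank ℝ (restrictTotalDegree (Fin 2) ℝ n) = (n+1)*(n+2)/2 := finrank_P n
  have hPk : Module.finrank ℝ (restrictTotalDegree (Fin 2) ℝ (n-k)) = (n-k+1)*(n-k+2)/2 :=
    finrank_P (n-k)
  have hMrank : Module.finrank ℝ (LinearMap.range M) = (n-k+1)*(n-k+2)/2 := by
    rw [LinearMap.finrank_range_of_inj hMinj, hPk]
  have hcod : Module.finrank ℝ ({A // A ∈ X} → ℝ) = X.card := by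
    rw [Module.finrank_fintype_fun_eq_card, Fintype.card_coe]
  have hkey := key_arith n k hk
  rw [hNInd, hRHS]
  set Nn := (n+1)*(n+2)/2 with hNn
  set Nk := (n-k+1)*(n-k+2)/2 with hNk
  set dd := k*(2*n+3-k)/2 with hdd
  constructor
  · intro hs
    have hr1 : Module.finrank ℝ (LinearMap.range L) = X.card := by
      rw [LinearMap.range_eq_top.mpr hs, finrank_top, hcod]
    have hker : Module.finrank ℝ (LinearMap.ker L) = Nk := by omega
    exact le_of_eq (Submodule.eq_of_le_of_finrank_le hML (by rw [hker, hMrank])).symm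
  · intro hle
    have h1 : Module.finrank ℝ (LinearMap.ker L) ≤ Nk := by
      rw [← hMrank]
      exact Submodule.finrank_mono hle
    have h2 : Module.finrank ℝ (LinearMap.range L) ≤ X.card := by
      rw [← hcod]
      exact Submodule.finrank_le _
    rw [← LinearMap.range_eq_top]
    apply Submodule.eq_top_of_finrank_eq
    rw [hcod]
    omega
end

section
/- Let X be an n-independent set of d(n,k−1) + 2 points in ℝ², where 1 ≤ k ≤ n and d(n,k−1) = (k−1)(2n+4−k)/2. Then at most one curve of degree k passes through all points of X; i.e., any two polynomials of degree at most k vanishing on X are proportional (up to scalar multiple). -/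
open MvPolynomial

namespace Stmt15Aux

open Module Submodule

set_option synthInstance.maxHeartbeats 1000000
set_option maxHeartbeats 2000000

noncomputable section

abbrev PP := MvPolynomial (Fin 2) ℝ
abbrev TT (m : ℕ) : Submodule ℝ PP := restrictTotalDegree (Fin 2) ℝ m
abbrev DD (m : ℕ) : ℕ := Module.finrank ℝ (TT m)

lemma sum_eq_two (s : Fin 2 →₀ ℕ) : (s.sum fun _ e => e) = s 0 + s 1 := by
  rw [Finsupp.sum_fintype _ _ (fun _ => rfl), Fin.sum_univ_two]

lemma two_DD (m : ℕ) : 2 * DD m = (m+1)*(m+2) := by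
  classical
  set S : Set (Fin 2 →₀ ℕ) := {s : Fin 2 →₀ ℕ | (s.sum fun _ e => e) ≤ m} with hS
  have b : Basis S ℝ (TT m) := basisRestrictSupport ℝ S
  set F : Finset (ℕ × ℕ) := (Finset.range (m+1)).biUnion (fun c => Finset.HasAntidiagonal.antidiagonal c) with hF
  have hmemF : ∀ p : ℕ × ℕ, p ∈ F ↔ p.1 + p.2 ≤ m := by
    intro p
    simp only [hF, Finset.mem_biUnion, Finset.mem_range, Finset.HasAntidiagonal.mem_antidiagonal]
    constructor
    · rintro ⟨c, hc, h⟩; omega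
    · intro h; exact ⟨p.1 + p.2, by omega, rfl⟩
  have e1 : S ≃ {p : ℕ × ℕ // p.1 + p.2 ≤ m} :=
    Equiv.subtypeEquiv (Finsupp.equivFunOnFinite.trans (finTwoArrowEquiv ℕ)) (fun s => by
      simp [hS, sum_eq_two, finTwoArrowEquiv, piFinTwoEquiv])
  have e2 : {p : ℕ × ℕ // p.1 + p.2 ≤ m} ≃ F := (Equiv.subtypeEquivRight (fun p => (hmemF p).symm))
  have : Fintype S := Fintype.ofEquiv F (e2.symm.trans e1.symm)
  have hcard : DD m = Fintype.card S := finrank_eq_card_basis b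
  have hcard2 : Fintype.card S = F.card := by
    rw [Fintype.card_congr (e1.trans e2), Fintype.card_coe]
  have hdisj : ∀ c ∈ Finset.range (m+1), ∀ d ∈ Finset.range (m+1), c ≠ d →
      Disjoint (Finset.HasAntidiagonal.antidiagonal c) (Finset.HasAntidiagonal.antidiagonal d) := by
    intro c _ d _ hcd
    refine Finset.disjoint_left.mpr (fun p hp hp' => hcd ?_)
    rw [Finset.HasAntidiagonal.mem_antidiagonal] at hp hp'
    omega
  have hFcard : F.card = ∑ c ∈ Finset.range (m+1), (c+1) := by
    rw [hF, Finset.card_biUnion hdisj]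
    exact Finset.sum_congr rfl (fun c _ => Finset.Nat.card_antidiagonal c)
  have hsum : (∑ c ∈ Finset.range (m+1), c) * 2 = (m+1) * m := by
    simpa using Finset.sum_range_id_mul_two (m+1)
  have : ∑ c ∈ Finset.range (m+1), (c+1) = (∑ c ∈ Finset.range (m+1), c) + (m+1) := by
    rw [Finset.sum_add_distrib, Finset.sum_const, Finset.card_range, smul_eq_mul, mul_one]
  rw [hcard, hcard2, hFcard, this]
  nlinarith [hsum]

abbrev MM (f : PP) (m : ℕ) : Submodule ℝ PP := (TT m).map (LinearMap.mulLeft ℝ f)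

lemma MM_le {f : PP} {d m r : ℕ} (hf : f.totalDegree ≤ d) (hdm : d + m ≤ r) :
    MM f m ≤ TT r := by
  rw [Submodule.map_le_iff_le_comap]
  intro g hg
  rw [mem_restrictTotalDegree] at hg
  simp only [Submodule.mem_comap, LinearMap.mulLeft_apply, mem_restrictTotalDegree]
  calc (f * g).totalDegree ≤ f.totalDegree + g.totalDegree := totalDegree_mul f g
    _ ≤ r := by omega

lemma finrank_MM {f : PP} (hf : f ≠ 0) (m : ℕ) : Module.finrank ℝ (MM f m) = DD m := by
  have hinj : Function.Injective (LinearMap.mulLeft ℝ f) := fun a b h => by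
    simpa using mul_left_cancel₀ hf (h : f * a = f * b)
  exact (LinearEquiv.finrank_eq (Submodule.equivMapOfInjective _ hinj (TT m))).symm

lemma finrank_MM_le (f : PP) (m : ℕ) : Module.finrank ℝ (MM f m) ≤ DD m :=
  Submodule.finrank_map_le _ _

lemma count_le (n : ℕ) (X : Finset (Fin 2 → ℝ)) (hInd : NInd n X)
    (W : Submodule ℝ PP) (hWT : W ≤ TT n)
    (hvan : ∀ f ∈ W, ∀ A ∈ X, eval A f = 0) :
    X.card + Module.finrank ℝ W ≤ DD n := by
  classical
  let E : TT n →ₗ[ℝ] (X → ℝ) :=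
    { toFun := fun f A => eval (A : Fin 2 → ℝ) (f : PP)
      map_add' := fun f g => by funext A; simp
      map_smul' := fun c f => by funext A; simp }
  have hE : ∀ (f : TT n) (A : X), E f A = eval (A : Fin 2 → ℝ) (f : PP) := fun _ _ => rfl
  have hsurj : Function.Surjective E := by
    intro v
    choose pf hpf using fun A : X => hInd A A.2
    have hmem : (∑ A : X, v A • pf A) ∈ TT n := by
      refine Submodule.sum_mem _ (fun A _ => Submodule.smul_mem _ _ ?_)
      exact (mem_restrictTotalDegree _ _ _).mpr (hpf A).1
    refine ⟨⟨∑ A : X, v A • pf A, hmem⟩, ?_⟩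
    funext B
    rw [hE]
    push_cast
    rw [map_sum]
    rw [Finset.sum_eq_single B]
    · simp [(hpf B).2.1]
    · intro A _ hAB
      have : eval (B : Fin 2 → ℝ) (pf A) = 0 :=
        (hpf A).2.2 B B.2 (fun h => hAB (Subtype.ext h).symm)
      simp [this]
    · intro h; exact absurd (Finset.mem_univ B) h
  have hker : Submodule.comap (TT n).subtype W ≤ LinearMap.ker E := by
    intro x hx
    rw [LinearMap.mem_ker]
    funext A
    exact hvan x (Submodule.mem_comap.mp hx) A A.2
  have h1 : Module.finrank ℝ (LinearMap.range E) = X.card := by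
    rw [LinearMap.range_eq_top.mpr hsurj, finrank_top, Module.finrank_fintype_fun_eq_card,
      Fintype.card_coe]
  have h2 : Module.finrank ℝ W ≤ Module.finrank ℝ (LinearMap.ker E) := by
    have e : Module.finrank ℝ (Submodule.comap (TT n).subtype W) = Module.finrank ℝ W :=
      LinearEquiv.finrank_eq (Submodule.comapSubtypeEquivOfLe hWT)
    rw [← e]
    exact Submodule.finrank_mono hker
  have h3 := LinearMap.finrank_range_add_finrank_ker E
  have h4 : DD n = Module.finrank ℝ (TT n) := rfl
  omega

lemma topComponent_ne_zero {σ : Type*} {R : Type*} [CommRing R] {a : MvPolynomial σ R}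
    (ha : a ≠ 0) : homogeneousComponent a.totalDegree a ≠ 0 := by
  obtain ⟨d, hd, hdeg⟩ := Finset.exists_mem_eq_sup a.support
    (Finset.nonempty_iff_ne_empty.mpr (fun h => ha (support_eq_empty.mp h))) (fun m => m.sum fun _ e => e)
  intro h
  have hc := coeff_homogeneousComponent (σ := σ) a.totalDegree a d
  rw [h, coeff_zero] at hc
  have hdd : (Finsupp.degree d) = a.totalDegree := by
    rw [totalDegree, hdeg]
    rfl
  rw [if_pos hdd] at hc
  exact (mem_support_iff.mp hd) hc.symm

lemma totalDegree_mul_eq' {σ : Type*} {R : Type*} [CommRing R] [IsDomain R]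
    {a b : MvPolynomial σ R} (ha : a ≠ 0) (hb : b ≠ 0) :
    (a * b).totalDegree = a.totalDegree + b.totalDegree := by
  set da := a.totalDegree
  set db := b.totalDegree
  refine le_antisymm (totalDegree_mul a b) ?_
  by_contra hlt
  push_neg at hlt
  have hcomp : homogeneousComponent (da + db) (a * b) = 0 :=
    homogeneousComponent_eq_zero _ _ hlt
  have hdecomp : homogeneousComponent (da + db) (a * b)
      = homogeneousComponent da a * homogeneousComponent db b := by
    conv_lhs => rw [← sum_homogeneousComponent a, ← sum_homogeneousComponent b]
    rw [Finset.sum_mul_sum, map_sum]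
    rw [Finset.sum_eq_single da]
    · rw [map_sum, Finset.sum_eq_single db]
      · have hmem : homogeneousComponent da a * homogeneousComponent db b ∈
            homogeneousSubmodule σ R (da + db) :=
          (mem_homogeneousSubmodule _ _).mpr
            ((homogeneousComponent_isHomogeneous da a).mul
              (homogeneousComponent_isHomogeneous db b))
        rw [homogeneousComponent_of_mem hmem, if_pos rfl]
      · intro j hj hjne
        have hmem : homogeneousComponent da a * homogeneousComponent j b ∈
            homogeneousSubmodule σ R (da + j) :=
          (mem_homogeneousSubmodule _ _).mpr
            ((homogeneousComponent_isHomogeneous da a).mul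
              (homogeneousComponent_isHomogeneous j b))
        rw [homogeneousComponent_of_mem hmem, if_neg (by omega)]
      · intro h; exact absurd (Finset.self_mem_range_succ db) h
    · intro i hi hine
      rw [map_sum, Finset.sum_eq_zero]
      intro j hj
      rw [Finset.mem_range] at hi hj
      have hmem : homogeneousComponent i a * homogeneousComponent j b ∈
          homogeneousSubmodule σ R (i + j) :=
        (mem_homogeneousSubmodule _ _).mpr
          ((homogeneousComponent_isHomogeneous i a).mul
            (homogeneousComponent_isHomogeneous j b))
      rw [homogeneousComponent_of_mem hmem, if_neg (by omega)]
    · intro h; exact absurd (Finset.self_mem_range_succ da) h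
  rw [hcomp] at hdecomp
  exact mul_ne_zero (topComponent_ne_zero ha) (topComponent_ne_zero hb) hdecomp.symm

lemma eq_C_of_totalDegree_eq_zero {σ : Type*} {R : Type*} [CommRing R]
    {r : MvPolynomial σ R} (h : r.totalDegree = 0) : r = C (coeff 0 r) := by
  classical
  have hsupp := (totalDegree_eq_zero_iff (p := r)).mp h
  ext d
  rw [coeff_C]
  split_ifs with h0
  · rw [← h0]
  · have hd : d ∉ r.support := fun hd =>
      h0 (Finsupp.ext (fun i => by simp [hsupp d hd i])).symm
    exact notMem_support_iff.mp hd

end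

end Stmt15Aux

open Stmt15Aux Module Submodule

set_option synthInstance.maxHeartbeats 1000000
set_option maxHeartbeats 2000000

/-- An n-independent set of d(n,k−1)+2 points determines a curve of degree k uniquely:
any two polynomials of degree ≤ k vanishing on it are linearly dependent. -/
theorem stmt_15 (n k : ℕ) (hk1 : 1 ≤ k) (hkn : k ≤ n) (X : Finset (Fin 2 → ℝ))
    (hInd : NInd n X) (hcard : X.card = (k - 1) * (2 * n + 4 - k) / 2 + 2) :
    ∀ p q : MvPolynomial (Fin 2) ℝ, p.totalDegree ≤ k → q.totalDegree ≤ k →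
      (∀ A ∈ X, eval A p = 0) → (∀ A ∈ X, eval A q = 0) →
      ¬ LinearIndependent ℝ ![p, q] := by
  intro p q hpk hqk hpv hqv hli
  have pair := LinearIndependent.pair_iff.mp hli
  have hp0 : p ≠ 0 := by
    rintro rfl
    exact one_ne_zero (pair 1 0 (by simp)).1
  have hq0 : q ≠ 0 := by
    rintro rfl
    exact one_ne_zero (pair 0 1 (by simp)).2
  obtain ⟨k1, rfl⟩ : ∃ k1, k = k1 + 1 := ⟨k - 1, by omega⟩
  obtain ⟨c', hc'⟩ : ∃ c', k1 + 1 + c' = 2*n+4 := ⟨2*n+4-(k1+1), by omega⟩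
  have h2X : 2 * X.card = k1 * c' + 4 := by
    have hdvd : 2 ∣ k1 * c' := by
      rcases Nat.even_or_odd k1 with ⟨j, hj⟩ | ⟨j, hj⟩
      · exact Dvd.dvd.mul_right ⟨j, by omega⟩ _
      · exact Dvd.dvd.mul_left ⟨n+1-j, by omega⟩ _
    have h1 : k1 + 1 - 1 = k1 := by omega
    have h2 : 2*n+4-(k1+1) = c' := by omega
    rw [h1, h2] at hcard
    omega
  have key := count_le n X hInd
  -- every nonzero polynomial of degree ≤ k vanishing on X has degree exactly k
  have hdeg : ∀ r : MvPolynomial (Fin 2) ℝ, r ≠ 0 → r.totalDegree ≤ k1 + 1 →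
      (∀ A ∈ X, eval A r = 0) → r.totalDegree = k1 + 1 := by
    intro r hr hrk hrv
    by_contra hne
    set m := r.totalDegree with hm
    obtain ⟨a, ha⟩ : ∃ a, a + m = n := ⟨n - m, by omega⟩
    have hvanr : ∀ f ∈ MM r a, ∀ A ∈ X, eval A f = 0 := by
      intro f hf A hA
      obtain ⟨g, hg, rfl⟩ := Submodule.mem_map.mp hf
      simp only [LinearMap.mulLeft_apply]
      rw [map_mul, hrv A hA, zero_mul]
    have hW := key (MM r a) (MM_le le_rfl (by omega)) hvanr
    rw [finrank_MM hr] at hW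
    have t1 := two_DD n
    have t2 := two_DD a
    -- hW : X.card + DD a ≤ DD n
    have hW2 : k1*c' + 4 + (a+1)*(a+2) ≤ (n+1)*(n+2) := by linarith
    obtain ⟨u, hu⟩ : ∃ u, m + u = k1 := ⟨k1 - m, by omega⟩
    obtain ⟨v, hv⟩ : ∃ v, u + v = a := ⟨a - u, by omega⟩
    have e1 : a = u + v := by omega
    have e2 : n = u + v + m := by omega
    have e3 : c' = u + 2*v + m + 3 := by omega
    have e4 : k1 = m + u := by omega
    rw [e1, e2, e3, e4] at hW2
    nlinarith [hW2, sq_nonneg u, Nat.zero_le (u*v)]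
  have hdp := hdeg p hp0 hpk hpv
  have hdq := hdeg q hq0 hqk hqv
  obtain ⟨p', q', cc, hrel, hcp, hcq⟩ :=
    UniqueFactorizationMonoid.exists_reduced_factors p hp0 q
  have hc0 : cc ≠ 0 := fun h => hp0 (by rw [← hcp, h, zero_mul])
  have hp'0 : p' ≠ 0 := fun h => hp0 (by rw [← hcp, h, mul_zero])
  have hq'0 : q' ≠ 0 := fun h => hq0 (by rw [← hcq, h, mul_zero])
  have hd1 : cc.totalDegree + p'.totalDegree = k1 + 1 := by
    rw [← totalDegree_mul_eq' hc0 hp'0, hcp, hdp]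
  have hd2 : cc.totalDegree + q'.totalDegree = k1 + 1 := by
    rw [← totalDegree_mul_eq' hc0 hq'0, hcq, hdq]
  by_cases hs0 : q'.totalDegree = 0
  · -- both reduced factors are constants: p and q are proportional
    have hp'z : p'.totalDegree = 0 := by omega
    obtain ⟨α, rfl⟩ : ∃ α, p' = C α := ⟨_, eq_C_of_totalDegree_eq_zero hp'z⟩
    obtain ⟨β, rfl⟩ : ∃ β, q' = C β := ⟨_, eq_C_of_totalDegree_eq_zero hs0⟩
    have hzero : β • p + (-α) • q = 0 := by
      rw [← hcp, ← hcq, smul_eq_C_mul, smul_eq_C_mul, map_neg]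
      ring
    have hα0 : α ≠ 0 := fun h => hp'0 (by rw [h, map_zero])
    exact hα0 (neg_eq_zero.mp (pair β (-α) hzero).2)
  · -- the degree of the reduced factors is positive
    set s := q'.totalDegree with hs
    have hs1 : 1 ≤ s := by omega
    obtain ⟨a, hak⟩ : ∃ a, k1 + 1 + a = n := ⟨n - (k1+1), by omega⟩
    have hWle : MM p a ⊔ MM q a ≤ TT n :=
      sup_le (MM_le hpk (by omega)) (MM_le hqk (by omega))
    have hvan2 : ∀ f ∈ MM p a ⊔ MM q a, ∀ A ∈ X, eval A f = 0 := by
      intro f hf A hA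
      obtain ⟨y, hy, z, hz, rfl⟩ := Submodule.mem_sup.mp hf
      obtain ⟨g, hg, rfl⟩ := Submodule.mem_map.mp hy
      obtain ⟨h, hh, rfl⟩ := Submodule.mem_map.mp hz
      simp only [LinearMap.mulLeft_apply]
      rw [map_add, map_mul, map_mul, hpv A hA, hqv A hA, zero_mul, zero_mul, add_zero]
    have hkey := key _ hWle hvan2
    have hfr := Submodule.finrank_sup_add_finrank_inf_eq (MM p a) (MM q a)
    rw [finrank_MM hp0, finrank_MM hq0] at hfr
    have hinter : ∀ x ∈ MM p a ⊓ MM q a, x ≠ 0 →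
        ∃ u : MvPolynomial (Fin 2) ℝ, u ≠ 0 ∧ x = (p * q') * u ∧ s + u.totalDegree ≤ a := by
      intro x hx hx0
      obtain ⟨hx1, hx2⟩ := Submodule.mem_inf.mp hx
      obtain ⟨g, hg, hgx⟩ := Submodule.mem_map.mp hx1
      obtain ⟨h, hh, hhx⟩ := Submodule.mem_map.mp hx2
      simp only [LinearMap.mulLeft_apply] at hgx hhx
      have hg0 : g ≠ 0 := fun hg' => hx0 (by rw [← hgx, hg', mul_zero])
      have hdvd : q' ∣ p' * g := by
        refine ⟨h, mul_left_cancel₀ hc0 ?_⟩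
        rw [← mul_assoc, ← mul_assoc, hcp, hcq, hgx, hhx]
      obtain ⟨u, hgu⟩ := (hrel.symm).dvd_of_dvd_mul_left hdvd
      have hu0 : u ≠ 0 := fun h' => hg0 (by rw [hgu, h', mul_zero])
      refine ⟨u, hu0, by rw [← hgx, hgu]; ring, ?_⟩
      have hde := totalDegree_mul_eq' hq'0 hu0
      have hga : g.totalDegree ≤ a := (mem_restrictTotalDegree _ _ _).mp hg
      rw [hgu] at hga
      omega
    by_cases hsa : s ≤ a
    · have hint_le : MM p a ⊓ MM q a ≤ MM (p * q') (a - s) := by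
        intro x hx
        by_cases hx0 : x = 0
        · rw [hx0]; exact Submodule.zero_mem _
        · obtain ⟨u, hu0, hxu, hdeg'⟩ := hinter x hx hx0
          exact Submodule.mem_map.mpr ⟨u, (mem_restrictTotalDegree _ _ _).mpr (by omega),
            by simp only [LinearMap.mulLeft_apply]; exact hxu.symm⟩
      have hint_fr : finrank ℝ ↥(MM p a ⊓ MM q a) ≤ DD (a - s) :=
        le_trans (Submodule.finrank_mono hint_le) (finrank_MM_le _ _)
      obtain ⟨b, hb⟩ : ∃ b, b + s = a := ⟨a - s, by omega⟩
      have t1 := two_DD n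
      have t2 := two_DD a
      have t3 := two_DD (a - s)
      have hab : a - s = b := by omega
      rw [hab] at t3 hint_fr
      have hfin : k1*c' + 4 + 2*((a+1)*(a+2)) ≤ (n+1)*(n+2) + (b+1)*(b+2) := by linarith
      obtain ⟨s1, hs1'⟩ : ∃ s1, s1 + 1 = s := ⟨s - 1, by omega⟩
      have e1 : n = k1 + 1 + a := by omega
      have e2 : c' = k1 + 2*a + 5 := by omega
      have e3 : a = b + s1 + 1 := by omega
      rw [e1, e2, e3] at hfin
      nlinarith [hfin, sq_nonneg s1, Nat.zero_le (b*s1)]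
    · have hbot : MM p a ⊓ MM q a = ⊥ := by
        rw [eq_bot_iff]
        intro x hx
        rw [Submodule.mem_bot]
        by_contra hx0
        obtain ⟨u, hu0, _, hdeg'⟩ := hinter x hx hx0
        omega
      rw [hbot, finrank_bot] at hfr
      have t1 := two_DD n
      have t2 := two_DD a
      have hfin : k1*c' + 4 + 2*((a+1)*(a+2)) ≤ (n+1)*(n+2) := by linarith
      have e1 : n = k1 + 1 + a := by omega
      have e2 : c' = k1 + 2*a + 5 := by omega
      rw [e1, e2] at hfin
      nlinarith [hfin, sq_nonneg a]
end
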